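/- For a shape-regular quadrilateral K satisfying h_K ≤ ϱ ρ_K with ϱ > 2, the ratio of the maximum to the minimum of the Jacobian J_K over the reference square is bounded: max J_K / min J_K < h_K²/(2ρ_K²) ≤ ϱ²/2. -/

import Mathlib

open Metric Set

/-- The diameter of the largest circle inscribed in a plane set. -/
noncomputable def inscribedDiameter (s : Set (EuclideanSpace ℝ (Fin 2))) : ℝ :=
  sSup {d : ℝ | 0 ≤ d ∧ ∃ c, Metric.closedBall c (d / 2) ⊆ s}

noncomputable section
namespace JRB
abbrev E2 := EuclideanSpace ℝ (Fin 2)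
def crossv (A B p : E2) : ℝ := (B 0 - A 0) * (p 1 - A 1) - (B 1 - A 1) * (p 0 - A 0)
def mk2 (x y : ℝ) : E2 := (EuclideanSpace.equiv (Fin 2) ℝ).symm ![x, y]
@[simp] lemma mk2_zero (x y : ℝ) : mk2 x y 0 = x := rfl
@[simp] lemma mk2_one (x y : ℝ) : mk2 x y 1 = y := rfl

lemma dist2 (p q : E2) : dist p q = Real.sqrt ((p 0 - q 0)^2 + (p 1 - q 1)^2) := by
  rw [EuclideanSpace.dist_eq]
  simp [Fin.sum_univ_two, Real.dist_eq, sq_abs]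

lemma dist2_sq (p q : E2) : (dist p q)^2 = (p 0 - q 0)^2 + (p 1 - q 1)^2 := by
  rw [dist2, Real.sq_sqrt (by positivity)]

lemma abs_cross_le (u0 u1 w0 w1 : ℝ) :
    |u0 * w1 - u1 * w0| ≤ Real.sqrt (u0^2 + u1^2) * Real.sqrt (w0^2 + w1^2) := by
  have h2 : (u0 * w1 - u1 * w0)^2 ≤ (u0^2 + u1^2) * (w0^2 + w1^2) := by
    nlinarith [sq_nonneg (u0*w0 + u1*w1)]
  calc |u0 * w1 - u1 * w0| = Real.sqrt ((u0 * w1 - u1 * w0)^2) := (Real.sqrt_sq_eq_abs _).symm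
    _ ≤ Real.sqrt ((u0^2 + u1^2) * (w0^2 + w1^2)) := Real.sqrt_le_sqrt h2
    _ = Real.sqrt (u0^2 + u1^2) * Real.sqrt (w0^2 + w1^2) := Real.sqrt_mul (by positivity) _

lemma hull_halfplane {A B C : E2} (h : 0 ≤ crossv A B C) :
    convexHull ℝ ({A, B, C} : Set E2) ⊆ {p | 0 ≤ crossv A B p} := by
  apply convexHull_min
  · intro p hp
    simp only [Set.mem_insert_iff, Set.mem_singleton_iff] at hp
    show (0:ℝ) ≤ crossv A B p
    rcases hp with h1 | h1 | h1 <;> rw [h1]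
    · have : crossv A B A = 0 := by unfold crossv; ring
      linarith
    · have : crossv A B B = 0 := by unfold crossv; ring
      linarith
    · exact h
  · intro p hp q hq a b ha hb hab
    have hp' : 0 ≤ crossv A B p := hp
    have hq' : 0 ≤ crossv A B q := hq
    show 0 ≤ crossv A B (a • p + b • q)
    have hb' : b = 1 - a := by linarith
    have heq : crossv A B (a • p + b • q) = a * crossv A B p + b * crossv A B q := by
      simp only [crossv, PiLp.add_apply, PiLp.smul_apply, smul_eq_mul]
      subst hb'; ring
    rw [heq]
    exact add_nonneg (mul_nonneg ha hp') (mul_nonneg hb hq')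

lemma side_bound {A B C c : E2} {r : ℝ} (hX : 0 ≤ crossv A B C) (hr : 0 ≤ r)
    (h : closedBall c r ⊆ convexHull ℝ ({A, B, C} : Set E2)) :
    r * dist A B ≤ crossv A B c := by
  set L := dist A B with hL
  have hL0 : 0 ≤ L := dist_nonneg
  have hcmem : 0 ≤ crossv A B c := hull_halfplane hX (h (mem_closedBall_self hr))
  have hL2 : (B 0 - A 0)^2 + (B 1 - A 1)^2 = L^2 := by
    rw [hL, dist2_sq]; ring
  rcases eq_or_lt_of_le hL0 with hL0' | hLpos
  · rw [← hL0']
    simpa using hcmem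
  · set q : E2 := c + (r / L) • mk2 (B 1 - A 1) (A 0 - B 0) with hqdef
    have hq0 : q 0 = c 0 + (r / L) * (B 1 - A 1) := by
      simp [hqdef, PiLp.add_apply, PiLp.smul_apply, smul_eq_mul]
    have hq1 : q 1 = c 1 + (r / L) * (A 0 - B 0) := by
      simp [hqdef, PiLp.add_apply, PiLp.smul_apply, smul_eq_mul]
    have hdq : dist q c = r := by
      rw [dist2, hq0, hq1]
      have h5 : (c 0 + r / L * (B 1 - A 1) - c 0) ^ 2 + (c 1 + r / L * (A 0 - B 0) - c 1) ^ 2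
          = r^2 := by
        have h6 : (c 0 + r / L * (B 1 - A 1) - c 0) ^ 2 + (c 1 + r / L * (A 0 - B 0) - c 1) ^ 2
            = (r/L)^2 * ((B 0 - A 0)^2 + (B 1 - A 1)^2) := by ring
        rw [h6, hL2]
        field_simp
      rw [h5, Real.sqrt_sq hr]
    have hqmem : 0 ≤ crossv A B q := hull_halfplane hX (h (by simp [mem_closedBall, hdq]))
    have hcq : crossv A B q = crossv A B c - (r / L) * L^2 := by
      unfold crossv
      rw [hq0, hq1, ← hL2]; ring
    have h7 : (r / L) * L^2 = r * L := by field_simp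
    rw [hcq, h7] at hqmem
    linarith

lemma heron {A B C : E2} {a b c X : ℝ}
    (hX : X = crossv A B C)
    (ha : a = dist B C) (hb : b = dist C A) (hc : c = dist A B) :
    4*X^2 = (a+b+c)*(-a+b+c)*(a-b+c)*(a+b-c) := by
  have ha2 : a^2 = (C 0 - B 0)^2 + (C 1 - B 1)^2 := by rw [ha, dist2_sq]; ring
  have hb2 : b^2 = (A 0 - C 0)^2 + (A 1 - C 1)^2 := by rw [hb, dist2_sq]; ring
  have hc2 : c^2 = (B 0 - A 0)^2 + (B 1 - A 1)^2 := by rw [hc, dist2_sq]; ring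
  have hX' : X = (B 0 - A 0)*(C 1 - A 1)-(B 1 - A 1)*(C 0 - A 0) := hX
  subst hX'
  linear_combination (-(2*b^2+2*c^2-a^2-((C 0 - B 0)^2 + (C 1 - B 1)^2)))*ha2
    + (-(2*((C 0 - B 0)^2 + (C 1 - B 1)^2)+2*c^2-b^2-((A 0 - C 0)^2 + (A 1 - C 1)^2)))*hb2
    + (-(2*((C 0 - B 0)^2 + (C 1 - B 1)^2)+2*((A 0 - C 0)^2 + (A 1 - C 1)^2)-c^2
        -((B 0 - A 0)^2 + (B 1 - A 1)^2)))*hc2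

lemma hull_rot (A B C : E2) :
    convexHull ℝ ({A, B, C} : Set E2) = convexHull ℝ ({B, C, A} : Set E2) := by
  have : ({A, B, C} : Set E2) = {B, C, A} := by
    ext x; simp only [Set.mem_insert_iff, Set.mem_singleton_iff]; tauto
  rw [this]

lemma crossv_rot (A B C : E2) : crossv B C A = crossv A B C := by
  unfold crossv; ring

lemma key (X a b cc r : ℝ) (hX : 0 < X) (hr : 0 ≤ r)
    (hher : 4*X^2 = (a+b+cc)*(-a+b+cc)*(a-b+cc)*(a+b-cc))
    (hrP : r*(a+b+cc) ≤ X)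
    (hu : 0 ≤ -a+b+cc) (hv : 0 ≤ a-b+cc) (hw : 0 ≤ a+b-cc) :
    2 * Real.sqrt 27 * r^2 ≤ X := by
  have hamgm : 27*((-a+b+cc)*(a-b+cc)*(a+b-cc)) ≤ ((-a+b+cc)+(a-b+cc)+(a+b-cc))^3 := by
    nlinarith [mul_nonneg hu (sq_nonneg ((a-b+cc)-(a+b-cc))), mul_nonneg hv (sq_nonneg ((-a+b+cc)-(a+b-cc))),
      mul_nonneg hw (sq_nonneg ((-a+b+cc)-(a-b+cc))), mul_nonneg (mul_nonneg hu hv) hw]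
  have hP0 : 0 ≤ a+b+cc := by linarith
  have h108 : 108 * X^2 ≤ (a+b+cc)^4 := by
    have hm := mul_le_mul_of_nonneg_left hamgm hP0
    nlinarith [hm]
  rcases eq_or_lt_of_le hr with hr0 | hrpos
  · rw [← hr0]; simpa using le_of_lt hX
  · have hPpos : 0 < a+b+cc := by
      rcases eq_or_lt_of_le hP0 with h0 | h0
      · exfalso
        have h4 : (a+b+cc)^4 = 0 := by rw [← h0]; ring
        nlinarith [pow_pos hX 2]
      · exact h0
    have h27 : 108 * r^2 ≤ (a+b+cc)^2 := by
      have h9 : (r*(a+b+cc))^2 ≤ X^2 := by nlinarith [mul_nonneg hr hP0]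
      have h10 : (108*r^2) * ((a+b+cc)^2) ≤ ((a+b+cc)^2) * ((a+b+cc)^2) := by nlinarith [h9, h108]
      have hp2 : (0:ℝ) < (a+b+cc)^2 := by positivity
      exact le_of_mul_le_mul_right h10 hp2
    have hs27 : (Real.sqrt 27)^2 = 27 := Real.sq_sqrt (by norm_num)
    have hs27n : 0 ≤ Real.sqrt 27 := Real.sqrt_nonneg 27
    have hPr : 2 * Real.sqrt 27 * r ≤ a+b+cc := by
      have hsq : (2 * Real.sqrt 27 * r)^2 ≤ (a+b+cc)^2 := by nlinarith
      nlinarith [mul_nonneg (mul_nonneg (by norm_num : (0:ℝ) ≤ 2) hs27n) (le_of_lt hrpos), hPpos]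
    nlinarith [mul_le_mul_of_nonneg_right hPr (le_of_lt hrpos)]

lemma tri_lower {A B C c : E2} {r : ℝ} (hX : 0 < crossv A B C) (hr : 0 ≤ r)
    (h : closedBall c r ⊆ convexHull ℝ ({A, B, C} : Set E2)) :
    2 * Real.sqrt 27 * r^2 ≤ crossv A B C := by
  have hXBCA : crossv B C A = crossv A B C := crossv_rot A B C
  have hXCAB : crossv C A B = crossv A B C := by unfold crossv; ring
  have hBCA : closedBall c r ⊆ convexHull ℝ ({B, C, A} : Set E2) := by
    rw [← hull_rot]; exact h
  have hCAB : closedBall c r ⊆ convexHull ℝ ({C, A, B} : Set E2) := by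
    rw [← hull_rot]; exact hBCA
  have h1 : r * dist A B ≤ crossv A B c := side_bound (le_of_lt hX) hr h
  have h2 : r * dist B C ≤ crossv B C c :=
    side_bound (by rw [hXBCA]; exact le_of_lt hX) hr hBCA
  have h3 : r * dist C A ≤ crossv C A c :=
    side_bound (by rw [hXCAB]; exact le_of_lt hX) hr hCAB
  have hsum : crossv A B c + crossv B C c + crossv C A c = crossv A B C := by
    unfold crossv; ring
  have hher : 4*(crossv A B C)^2 =
      (dist B C + dist C A + dist A B)*(-(dist B C) + dist C A + dist A B)
      *(dist B C - dist C A + dist A B)*(dist B C + dist C A - dist A B) :=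
    heron rfl rfl rfl rfl
  have hu : 0 ≤ -(dist B C) + dist C A + dist A B := by
    have ht := dist_triangle B A C
    rw [dist_comm B A, dist_comm A C] at ht
    linarith
  have hv : 0 ≤ dist B C - dist C A + dist A B := by
    have ht := dist_triangle C B A
    rw [dist_comm C B, dist_comm B A] at ht
    linarith
  have hw : 0 ≤ dist B C + dist C A - dist A B := by
    have ht := dist_triangle A C B
    rw [dist_comm A C, dist_comm C B] at ht
    linarith
  exact key (crossv A B C) (dist B C) (dist C A) (dist A B) r hX hr hher (by linarith) hu hv hw

def icenter (A B C : E2) : E2 :=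
  (dist B C + dist C A + dist A B)⁻¹ • (dist B C • A + dist C A • B + dist A B • C)

lemma icenter_apply (A B C : E2) (i : Fin 2) :
    icenter A B C i = (dist B C * A i + dist C A * B i + dist A B * C i)
      / (dist B C + dist C A + dist A B) := by
  simp [icenter, PiLp.add_apply, PiLp.smul_apply, smul_eq_mul, div_eq_inv_mul]
  ring

lemma icenter_rot (A B C : E2) : icenter B C A = icenter A B C := by
  ext i
  rw [icenter_apply, icenter_apply]
  ring

lemma icenter_side {A B C p : E2} (hX : 0 < crossv A B C)
    (hP : 0 < dist B C + dist C A + dist A B)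
    (hp : dist p (icenter A B C) ≤ crossv A B C / (dist B C + dist C A + dist A B)) :
    0 ≤ crossv A B p := by
  set a := dist B C with hadef
  set b := dist C A with hbdef
  set cc := dist A B with hccdef
  set P := a + b + cc with hPdef
  set X := crossv A B C with hXdef
  have hPne : P ≠ 0 := ne_of_gt hP
  have hcent : crossv A B (icenter A B C) = cc * X / P := by
    unfold crossv
    rw [icenter_apply, icenter_apply]
    rw [show dist B C * A 1 + dist C A * B 1 + dist A B * C 1 = a * A 1 + b * B 1 + cc * C 1 from rfl]
    rw [show dist B C * A 0 + dist C A * B 0 + dist A B * C 0 = a * A 0 + b * B 0 + cc * C 0 from rfl]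
    rw [show dist B C + dist C A + dist A B = P from rfl]
    rw [hXdef]
    unfold crossv
    field_simp
    ring
  have hdelta : |(B 0 - A 0) * (p 1 - icenter A B C 1) - (B 1 - A 1) * (p 0 - icenter A B C 0)|
      ≤ cc * dist p (icenter A B C) := by
    have h1 := abs_cross_le (B 0 - A 0) (B 1 - A 1) (p 0 - icenter A B C 0) (p 1 - icenter A B C 1)
    have h2 : Real.sqrt ((B 0 - A 0)^2 + (B 1 - A 1)^2) = cc := by
      rw [hccdef, dist2]
      congr 1
      ring
    have h3 : Real.sqrt ((p 0 - icenter A B C 0)^2 + (p 1 - icenter A B C 1)^2)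
        = dist p (icenter A B C) := by
      rw [dist2]
    rw [h2, h3] at h1
    exact h1
  have hsplit : crossv A B p = crossv A B (icenter A B C)
      + ((B 0 - A 0) * (p 1 - icenter A B C 1) - (B 1 - A 1) * (p 0 - icenter A B C 0)) := by
    unfold crossv; ring
  have hcc0 : 0 ≤ cc := dist_nonneg
  have habs := neg_abs_le ((B 0 - A 0) * (p 1 - icenter A B C 1)
      - (B 1 - A 1) * (p 0 - icenter A B C 0))
  have hmul : cc * dist p (icenter A B C) ≤ cc * (X / P) :=
    mul_le_mul_of_nonneg_left hp hcc0
  have : cc * (X/P) = cc * X / P := by ring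
  rw [hsplit, hcent]
  linarith [hdelta, hmul, habs, this]

lemma crossv_rot' (A B C : E2) : crossv C A B = crossv A B C := by unfold crossv; ring

lemma mem_hull_of_cross {A B C p : E2} (hX : 0 < crossv A B C)
    (h1 : 0 ≤ crossv B C p) (h2 : 0 ≤ crossv C A p) (h3 : 0 ≤ crossv A B p) :
    p ∈ convexHull ℝ ({A, B, C} : Set E2) := by
  set w : Fin 3 → ℝ := ![crossv B C p, crossv C A p, crossv A B p] with hwdef
  set z : Fin 3 → E2 := ![A, B, C] with hzdef
  have hsumw : ∑ i : Fin 3, w i = crossv A B C := by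
    simp only [hwdef, Fin.sum_univ_three, Matrix.cons_val_zero, Matrix.cons_val_one,
      Matrix.head_cons, Matrix.cons_val_two, Matrix.tail_cons]
    unfold crossv; ring
  have hw : ∀ i ∈ Finset.univ, 0 ≤ w i := by
    intro i _
    fin_cases i <;> simpa [hwdef]
  have hz : ∀ i ∈ Finset.univ, z i ∈ ({A, B, C} : Set E2) := by
    intro i _
    fin_cases i <;> simp [hzdef]
  have hmem := Finset.centerMass_mem_convexHull Finset.univ hw (by rw [hsumw]; exact hX) hz
  have hcm : Finset.univ.centerMass w z = p := by
    rw [Finset.centerMass]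
    rw [hsumw]
    have hvec : ∑ i : Fin 3, w i • z i = crossv B C p • A + crossv C A p • B + crossv A B p • C := by
      simp [hwdef, hzdef, Fin.sum_univ_three]
    rw [hvec]
    have hcram : ∀ i : Fin 2, crossv B C p * A i + crossv C A p * B i + crossv A B p * C i
        = crossv A B C * p i := by
      rw [Fin.forall_fin_two]
      constructor <;> (unfold crossv; ring)
    ext i
    simp only [PiLp.smul_apply, PiLp.add_apply, smul_eq_mul]
    rw [hcram i]
    field_simp
  rwa [hcm] at hmem

lemma insc_subset {A B C : E2} (hX : 0 < crossv A B C)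
    (hP : 0 < dist B C + dist C A + dist A B) :
    closedBall (icenter A B C) (crossv A B C / (dist B C + dist C A + dist A B))
      ⊆ convexHull ℝ ({A, B, C} : Set E2) := by
  intro p hp
  rw [mem_closedBall] at hp
  have h3 : 0 ≤ crossv A B p := icenter_side hX hP hp
  have h1 : 0 ≤ crossv B C p := by
    apply icenter_side (A := B) (B := C) (C := A)
    · rw [crossv_rot]; exact hX
    · rw [show dist C A + dist A B + dist B C = dist B C + dist C A + dist A B from by ring]
      exact hP
    · rw [icenter_rot, crossv_rot]
      rw [show dist C A + dist A B + dist B C = dist B C + dist C A + dist A B from by ring]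
      exact hp
  have h2 : 0 ≤ crossv C A p := by
    apply icenter_side (A := C) (B := A) (C := B)
    · rw [crossv_rot']; exact hX
    · rw [show dist A B + dist B C + dist C A = dist B C + dist C A + dist A B from by ring]
      exact hP
    · rw [show icenter C A B = icenter A B C from by rw [icenter_rot, icenter_rot], crossv_rot']
      rw [show dist A B + dist B C + dist C A = dist B C + dist C A + dist A B from by ring]
      exact hp
  exact mem_hull_of_cross hX h1 h2 h3

lemma insc_bddAbove {s : Set E2} (hs : Bornology.IsBounded s) :
    BddAbove {d : ℝ | 0 ≤ d ∧ ∃ c, Metric.closedBall c (d / 2) ⊆ s} := by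
  refine ⟨Metric.diam s, ?_⟩
  rintro d ⟨hd0, c, hc⟩
  set p1 := c + (d/2) • mk2 1 0 with hp1def
  set p2 := c - (d/2) • mk2 1 0 with hp2def
  have hp10 : p1 0 = c 0 + d/2 := by
    simp [hp1def, PiLp.add_apply, PiLp.smul_apply, smul_eq_mul]
  have hp11 : p1 1 = c 1 := by
    simp [hp1def, PiLp.add_apply, PiLp.smul_apply, smul_eq_mul]
  have hp20 : p2 0 = c 0 - d/2 := by
    simp [hp2def, PiLp.sub_apply, PiLp.smul_apply, smul_eq_mul]
  have hp21 : p2 1 = c 1 := by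
    simp [hp2def, PiLp.sub_apply, PiLp.smul_apply, smul_eq_mul]
  have hd1 : dist p1 c = d/2 := by
    rw [dist2, hp10, hp11]
    rw [show (c 0 + d/2 - c 0)^2 + (c 1 - c 1)^2 = (d/2)^2 from by ring]
    exact Real.sqrt_sq (by linarith)
  have hd2 : dist p2 c = d/2 := by
    rw [dist2, hp20, hp21]
    rw [show (c 0 - d/2 - c 0)^2 + (c 1 - c 1)^2 = (d/2)^2 from by ring]
    exact Real.sqrt_sq (by linarith)
  have hd12 : dist p1 p2 = d := by
    rw [dist2, hp10, hp11, hp20, hp21]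
    rw [show (c 0 + d/2 - (c 0 - d/2))^2 + (c 1 - c 1)^2 = d^2 from by ring]
    exact Real.sqrt_sq hd0
  have h1 : p1 ∈ s := hc (by rw [mem_closedBall, hd1])
  have h2 : p2 ∈ s := hc (by rw [mem_closedBall, hd2])
  calc d = dist p1 p2 := hd12.symm
    _ ≤ Metric.diam s := Metric.dist_le_diam_of_mem hs h1 h2

lemma hull_bounded (A B C : E2) :
    Bornology.IsBounded (convexHull ℝ ({A, B, C} : Set E2)) :=
  isBounded_convexHull.mpr (Set.toFinite _).isBounded

lemma insc_nonempty (A B C : E2) :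
    (0:ℝ) ∈ {d : ℝ | 0 ≤ d ∧ ∃ c, Metric.closedBall c (d / 2) ⊆ convexHull ℝ ({A, B, C} : Set E2)} := by
  refine ⟨le_refl 0, A, ?_⟩
  rw [show (0:ℝ)/2 = 0 from by norm_num, Metric.closedBall_zero]
  exact Set.singleton_subset_iff.mpr (subset_convexHull ℝ _ (Set.mem_insert A _))

lemma insc_pos {A B C : E2} (hX : 0 < crossv A B C) :
    0 < inscribedDiameter (convexHull ℝ ({A, B, C} : Set E2)) := by
  have hP : 0 < dist B C + dist C A + dist A B := by
    rcases eq_or_lt_of_le (dist_nonneg : 0 ≤ dist A B) with h0 | h0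
    · exfalso
      have hAB : A = B := dist_eq_zero.mp h0.symm
      rw [hAB] at hX
      have : crossv B B C = 0 := by unfold crossv; ring
      linarith
    · linarith [dist_nonneg (x := B) (y := C), dist_nonneg (x := C) (y := A)]
  set r0 := crossv A B C / (dist B C + dist C A + dist A B) with hr0def
  have hr0pos : 0 < r0 := div_pos hX hP
  have hmem : 2*r0 ∈ {d : ℝ | 0 ≤ d ∧ ∃ c, Metric.closedBall c (d / 2) ⊆ convexHull ℝ ({A, B, C} : Set E2)} := by
    refine ⟨by linarith, icenter A B C, ?_⟩
    rw [show 2*r0/2 = r0 from by ring, hr0def]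
    exact insc_subset hX hP
  have hle : 2*r0 ≤ inscribedDiameter (convexHull ℝ ({A, B, C} : Set E2)) :=
    le_csSup (insc_bddAbove (hull_bounded A B C)) hmem
  linarith

lemma insc_sq_le {A B C : E2} (hX : 0 < crossv A B C) {ρ : ℝ} (hρ0 : 0 ≤ ρ)
    (hρ : ρ ≤ inscribedDiameter (convexHull ℝ ({A, B, C} : Set E2))) :
    Real.sqrt 27 * ρ^2 ≤ 2 * crossv A B C := by
  have hs27pos : 0 < Real.sqrt 27 := Real.sqrt_pos.mpr (by norm_num)
  set X := crossv A B C with hXdef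
  have hub : ∀ d ∈ {d : ℝ | 0 ≤ d ∧ ∃ c, Metric.closedBall c (d / 2) ⊆ convexHull ℝ ({A, B, C} : Set E2)},
      d ≤ Real.sqrt (2 * X / Real.sqrt 27) := by
    rintro d ⟨hd0, c, hc⟩
    have h1 : 2 * Real.sqrt 27 * (d/2)^2 ≤ X := tri_lower hX (by linarith) hc
    have hd2 : d^2 ≤ 2*X/Real.sqrt 27 := by
      rw [le_div_iff₀ hs27pos]
      nlinarith
    calc d = Real.sqrt (d^2) := (Real.sqrt_sq hd0).symm
      _ ≤ Real.sqrt (2*X/Real.sqrt 27) := Real.sqrt_le_sqrt hd2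
  have hsup : inscribedDiameter (convexHull ℝ ({A, B, C} : Set E2)) ≤ Real.sqrt (2 * X / Real.sqrt 27) :=
    csSup_le ⟨0, insc_nonempty A B C⟩ hub
  have hρB : ρ ≤ Real.sqrt (2 * X / Real.sqrt 27) := le_trans hρ hsup
  have h2 : ρ^2 ≤ 2*X/Real.sqrt 27 := by
    calc ρ^2 ≤ (Real.sqrt (2 * X / Real.sqrt 27))^2 := by
          exact pow_le_pow_left₀ hρ0 hρB 2
      _ = 2*X/Real.sqrt 27 := Real.sq_sqrt (by positivity)
  rw [le_div_iff₀ hs27pos] at h2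
  linarith

lemma crossv_le (A B C : E2) : crossv A B C ≤ dist A B * dist A C := by
  have h := abs_cross_le (B 0 - A 0) (B 1 - A 1) (C 0 - A 0) (C 1 - A 1)
  have e1 : Real.sqrt ((B 0 - A 0)^2 + (B 1 - A 1)^2) = dist A B := by
    rw [dist2]; congr 1; ring
  have e2 : Real.sqrt ((C 0 - A 0)^2 + (C 1 - A 1)^2) = dist A C := by
    rw [dist2]; congr 1; ring
  rw [e1, e2] at h
  calc crossv A B C ≤ |crossv A B C| := le_abs_self _
    _ = |(B 0 - A 0) * (C 1 - A 1) - (B 1 - A 1) * (C 0 - A 0)| := rfl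
    _ ≤ dist A B * dist A C := h

end JRB

end


set_option maxHeartbeats 2000000 in
/-- For a shape-regular convex quadrilateral `K` (with `h_K ≤ ϱ ρ_K`, `ϱ > 2`), the ratio of
the maximum to the minimum of the Jacobian `J_K` over the reference square is bounded by
`h_K²/(2 ρ_K²) ≤ ϱ²/2`. -/
theorem jacobian_ratio_bound
    (Z : Fin 4 → EuclideanSpace ℝ (Fin 2)) (ϱ : ℝ) (hϱ : 2 < ϱ)
    -- the vertices are in convex (counterclockwise) cyclic position
    (hconvex : ∀ i : Fin 4,
      0 < (Z (i+1) 0 - Z i 0) * (Z (i+2) 1 - Z (i+1) 1)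
          - (Z (i+1) 1 - Z i 1) * (Z (i+2) 0 - Z (i+1) 0))
    (hK ρK : ℝ)
    (hhK : hK = Metric.diam (convexHull ℝ (Set.range Z)))
    (hρK : ρK = ⨅ i : Fin 4, inscribedDiameter (convexHull ℝ {Z (i-1), Z i, Z (i+1)}))
    (hreg : hK ≤ ϱ * ρK)
    (a1 a2 a12 b1 b2 b12 : ℝ)
    (ha1 : a1 = (-(Z 0 0) + Z 1 0 + Z 2 0 - Z 3 0) / 4)
    (ha2 : a2 = (-(Z 0 0) - Z 1 0 + Z 2 0 + Z 3 0) / 4)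
    (ha12 : a12 = (Z 0 0 - Z 1 0 + Z 2 0 - Z 3 0) / 4)
    (hb1 : b1 = (-(Z 0 1) + Z 1 1 + Z 2 1 - Z 3 1) / 4)
    (hb2 : b2 = (-(Z 0 1) - Z 1 1 + Z 2 1 + Z 3 1) / 4)
    (hb12 : b12 = (Z 0 1 - Z 1 1 + Z 2 1 - Z 3 1) / 4)
    (J : ℝ → ℝ → ℝ)
    (hJ : ∀ ξ η, J ξ η = (a1 * b2 - a2 * b1) + (a1 * b12 - a12 * b1) * ξ
        + (a12 * b2 - a2 * b12) * η) :
    sSup ((fun p : ℝ × ℝ => J p.1 p.2) '' (Set.Icc (-1 : ℝ) 1 ×ˢ Set.Icc (-1 : ℝ) 1))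
      / sInf ((fun p : ℝ × ℝ => J p.1 p.2) '' (Set.Icc (-1 : ℝ) 1 ×ˢ Set.Icc (-1 : ℝ) 1))
      < hK ^ 2 / (2 * ρK ^ 2) ∧ hK ^ 2 / (2 * ρK ^ 2) ≤ ϱ ^ 2 / 2 := by
  set α := a1 * b2 - a2 * b1 with hα
  set β := a1 * b12 - a12 * b1 with hβ
  set γ := a12 * b2 - a2 * b12 with hγ
  -- triangle cross products (positively oriented)
  have key1 : ∀ i : Fin 4, 0 < JRB.crossv (Z (i-1)) (Z i) (Z (i+1)) := by
    intro i
    have h := hconvex (i-1)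
    rw [sub_add_cancel] at h
    rw [show i - 1 + 2 = i + 1 from by generalize i = j; revert j; decide] at h
    have e : JRB.crossv (Z (i-1)) (Z i) (Z (i+1))
        = (Z i 0 - Z (i-1) 0) * (Z (i+1) 1 - Z i 1)
          - (Z i 1 - Z (i-1) 1) * (Z (i+1) 0 - Z i 0) := by
      unfold JRB.crossv; ring
    rw [e]; exact h
  -- ρK is below each inscribed diameter
  have keyρ_le : ∀ i : Fin 4,
      ρK ≤ inscribedDiameter (convexHull ℝ {Z (i-1), Z i, Z (i+1)}) := by
    intro i
    rw [hρK]
    exact ciInf_le (Set.finite_range _).bddBelow i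
  -- positivity of ρK
  have hρpos : 0 < ρK := by
    have hpos : ∀ i : Fin 4, 0 < inscribedDiameter (convexHull ℝ {Z (i-1), Z i, Z (i+1)}) :=
      fun i => JRB.insc_pos (key1 i)
    set g : Fin 4 → ℝ := fun i => inscribedDiameter (convexHull ℝ {Z (i-1), Z i, Z (i+1)}) with hg
    have h4 : ∀ i : Fin 4, min (min (g 0) (g 1)) (min (g 2) (g 3)) ≤ g i := by
      intro i
      fin_cases i
      · exact le_trans (min_le_left _ _) (min_le_left _ _)
      · exact le_trans (min_le_left _ _) (min_le_right _ _)
      · exact le_trans (min_le_right _ _) (min_le_left _ _)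
      · exact le_trans (min_le_right _ _) (min_le_right _ _)
    have hminpos : 0 < min (min (g 0) (g 1)) (min (g 2) (g 3)) :=
      lt_min (lt_min (hpos 0) (hpos 1)) (lt_min (hpos 2) (hpos 3))
    rw [hρK]
    exact lt_of_lt_of_le hminpos (le_ciInf h4)
  have hρ0 : 0 ≤ ρK := le_of_lt hρpos
  have keylower : ∀ i : Fin 4, Real.sqrt 27 * ρK^2
      ≤ 2 * JRB.crossv (Z (i-1)) (Z i) (Z (i+1)) :=
    fun i => JRB.insc_sq_le (key1 i) hρ0 (keyρ_le i)
  -- the four corner cross values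
  have hL0 : Real.sqrt 27 * ρK^2 ≤ 2 * JRB.crossv (Z 0) (Z 1) (Z 2) := by
    have h := keylower 1
    rwa [show (1:Fin 4) - 1 = 0 from by decide, show (1:Fin 4) + 1 = 2 from by decide] at h
  have hL1 : Real.sqrt 27 * ρK^2 ≤ 2 * JRB.crossv (Z 1) (Z 2) (Z 3) := by
    have h := keylower 2
    rwa [show (2:Fin 4) - 1 = 1 from by decide, show (2:Fin 4) + 1 = 3 from by decide] at h
  have hL2 : Real.sqrt 27 * ρK^2 ≤ 2 * JRB.crossv (Z 2) (Z 3) (Z 0) := by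
    have h := keylower 3
    rwa [show (3:Fin 4) - 1 = 2 from by decide, show (3:Fin 4) + 1 = 0 from by decide] at h
  have hL3 : Real.sqrt 27 * ρK^2 ≤ 2 * JRB.crossv (Z 3) (Z 0) (Z 1) := by
    have h := keylower 0
    rwa [show (0:Fin 4) - 1 = 3 from by decide, show (0:Fin 4) + 1 = 1 from by decide] at h
  have hP0 : 0 < JRB.crossv (Z 0) (Z 1) (Z 2) := by
    have h := key1 1
    rwa [show (1:Fin 4) - 1 = 0 from by decide, show (1:Fin 4) + 1 = 2 from by decide] at h
  have hP1 : 0 < JRB.crossv (Z 1) (Z 2) (Z 3) := by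
    have h := key1 2
    rwa [show (2:Fin 4) - 1 = 1 from by decide, show (2:Fin 4) + 1 = 3 from by decide] at h
  have hP2 : 0 < JRB.crossv (Z 2) (Z 3) (Z 0) := by
    have h := key1 3
    rwa [show (3:Fin 4) - 1 = 2 from by decide, show (3:Fin 4) + 1 = 0 from by decide] at h
  have hP3 : 0 < JRB.crossv (Z 3) (Z 0) (Z 1) := by
    have h := key1 0
    rwa [show (0:Fin 4) - 1 = 3 from by decide, show (0:Fin 4) + 1 = 1 from by decide] at h
  -- diameter bounds
  have hbdd : Bornology.IsBounded (convexHull ℝ (Set.range Z)) :=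
    isBounded_convexHull.mpr (Set.finite_range Z).isBounded
  have hdistK : ∀ i j : Fin 4, dist (Z i) (Z j) ≤ hK := by
    intro i j
    rw [hhK]
    exact Metric.dist_le_diam_of_mem hbdd
      (subset_convexHull ℝ _ (Set.mem_range_self i))
      (subset_convexHull ℝ _ (Set.mem_range_self j))
  have hK0 : 0 < hK := by
    have hne : Z 0 ≠ Z 1 := by
      intro he
      rw [he] at hP0
      have hzero : JRB.crossv (Z 1) (Z 1) (Z 2) = 0 := by unfold JRB.crossv; ring
      linarith
    calc (0:ℝ) < dist (Z 0) (Z 1) := dist_pos.mpr hne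
      _ ≤ hK := hdistK 0 1
  have hU : ∀ i j k : Fin 4, JRB.crossv (Z i) (Z j) (Z k) ≤ hK^2 := by
    intro i j k
    calc JRB.crossv (Z i) (Z j) (Z k) ≤ dist (Z i) (Z j) * dist (Z i) (Z k) :=
          JRB.crossv_le _ _ _
      _ ≤ hK * hK := by
          apply mul_le_mul (hdistK i j) (hdistK i k) dist_nonneg (le_of_lt hK0)
      _ = hK^2 := by ring
  -- corner value identities
  have hv0 : α + β - γ = JRB.crossv (Z 0) (Z 1) (Z 2) / 4 := by
    rw [hα, hβ, hγ, ha1, ha2, ha12, hb1, hb2, hb12]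
    unfold JRB.crossv; ring
  have hv1 : α + β + γ = JRB.crossv (Z 1) (Z 2) (Z 3) / 4 := by
    rw [hα, hβ, hγ, ha1, ha2, ha12, hb1, hb2, hb12]
    unfold JRB.crossv; ring
  have hv2 : α - β + γ = JRB.crossv (Z 2) (Z 3) (Z 0) / 4 := by
    rw [hα, hβ, hγ, ha1, ha2, ha12, hb1, hb2, hb12]
    unfold JRB.crossv; ring
  have hv3 : α - β - γ = JRB.crossv (Z 3) (Z 0) (Z 1) / 4 := by
    rw [hα, hβ, hγ, ha1, ha2, ha12, hb1, hb2, hb12]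
    unfold JRB.crossv; ring
  -- uniform corner bounds
  have hs27gt : (4:ℝ) < Real.sqrt 27 := by
    have h1 := Real.sq_sqrt (by norm_num : (0:ℝ) ≤ 27)
    nlinarith [Real.sqrt_nonneg 27]
  -- sSup and sInf of the image
  have hJval : ∀ ξ η : ℝ, J ξ η = α + β * ξ + γ * η := fun ξ η => hJ ξ η
  clear_value α β γ
  clear hα hβ hγ hJ
  have habsβ : β * (if 0 ≤ β then (1:ℝ) else -1) = |β| := by
    rcases le_or_gt 0 β with hb | hb
    · rw [if_pos hb, abs_of_nonneg hb]; ring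
    · rw [if_neg (not_le.mpr hb), abs_of_neg hb]; ring
  have habsγ : γ * (if 0 ≤ γ then (1:ℝ) else -1) = |γ| := by
    rcases le_or_gt 0 γ with hb | hb
    · rw [if_pos hb, abs_of_nonneg hb]; ring
    · rw [if_neg (not_le.mpr hb), abs_of_neg hb]; ring
  have habsβ' : β * (if 0 ≤ β then (-1:ℝ) else 1) = -|β| := by
    rcases le_or_gt 0 β with hb | hb
    · rw [if_pos hb, abs_of_nonneg hb]; ring
    · rw [if_neg (not_le.mpr hb), abs_of_neg hb]; ring
  have habsγ' : γ * (if 0 ≤ γ then (-1:ℝ) else 1) = -|γ| := by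
    rcases le_or_gt 0 γ with hb | hb
    · rw [if_pos hb, abs_of_nonneg hb]; ring
    · rw [if_neg (not_le.mpr hb), abs_of_neg hb]; ring
  have hmem1 : (if 0 ≤ β then (1:ℝ) else -1) ∈ Set.Icc (-1:ℝ) 1 := by
    split_ifs <;> constructor <;> norm_num
  have hmem1' : (if 0 ≤ β then (-1:ℝ) else 1) ∈ Set.Icc (-1:ℝ) 1 := by
    split_ifs <;> constructor <;> norm_num
  have hmem2 : (if 0 ≤ γ then (1:ℝ) else -1) ∈ Set.Icc (-1:ℝ) 1 := by
    split_ifs <;> constructor <;> norm_num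
  have hmem2' : (if 0 ≤ γ then (-1:ℝ) else 1) ∈ Set.Icc (-1:ℝ) 1 := by
    split_ifs <;> constructor <;> norm_num
  have hgreatest : IsGreatest
      ((fun p : ℝ × ℝ => J p.1 p.2) '' (Set.Icc (-1 : ℝ) 1 ×ˢ Set.Icc (-1 : ℝ) 1))
      (α + |β| + |γ|) := by
    constructor
    · refine ⟨((if 0 ≤ β then (1:ℝ) else -1), (if 0 ≤ γ then (1:ℝ) else -1)), ⟨hmem1, hmem2⟩, ?_⟩
      dsimp only
      rw [hJval, habsβ, habsγ]
    · rintro x ⟨⟨ξ, η⟩, ⟨hξ, hη⟩, rfl⟩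
      rw [Set.mem_Icc] at hξ hη
      dsimp only
      rw [hJval]
      have h1 : β * ξ ≤ |β| := by
        calc β * ξ ≤ |β * ξ| := le_abs_self _
          _ = |β| * |ξ| := abs_mul _ _
          _ ≤ |β| * 1 := mul_le_mul_of_nonneg_left (abs_le.mpr ⟨hξ.1, hξ.2⟩) (abs_nonneg β)
          _ = |β| := mul_one _
      have h2 : γ * η ≤ |γ| := by
        calc γ * η ≤ |γ * η| := le_abs_self _
          _ = |γ| * |η| := abs_mul _ _
          _ ≤ |γ| * 1 := mul_le_mul_of_nonneg_left (abs_le.mpr ⟨hη.1, hη.2⟩) (abs_nonneg γ)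
          _ = |γ| := mul_one _
      linarith
  have hleast : IsLeast
      ((fun p : ℝ × ℝ => J p.1 p.2) '' (Set.Icc (-1 : ℝ) 1 ×ˢ Set.Icc (-1 : ℝ) 1))
      (α - |β| - |γ|) := by
    constructor
    · refine ⟨((if 0 ≤ β then (-1:ℝ) else 1), (if 0 ≤ γ then (-1:ℝ) else 1)), ⟨hmem1', hmem2'⟩, ?_⟩
      dsimp only
      rw [hJval, habsβ', habsγ']
      ring
    · rintro x ⟨⟨ξ, η⟩, ⟨hξ, hη⟩, rfl⟩
      rw [Set.mem_Icc] at hξ hη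
      dsimp only
      rw [hJval]
      have h1 : -|β| ≤ β * ξ := by
        have : |β * ξ| ≤ |β| := by
          calc |β * ξ| = |β| * |ξ| := abs_mul _ _
            _ ≤ |β| * 1 := mul_le_mul_of_nonneg_left (abs_le.mpr ⟨hξ.1, hξ.2⟩) (abs_nonneg β)
            _ = |β| := mul_one _
        linarith [neg_abs_le (β * ξ)]
      have h2 : -|γ| ≤ γ * η := by
        have : |γ * η| ≤ |γ| := by
          calc |γ * η| = |γ| * |η| := abs_mul _ _
            _ ≤ |γ| * 1 := mul_le_mul_of_nonneg_left (abs_le.mpr ⟨hη.1, hη.2⟩) (abs_nonneg γ)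
            _ = |γ| := mul_one _
        linarith [neg_abs_le (γ * η)]
      linarith
  have hsup := hgreatest.csSup_eq
  have hinf := hleast.csInf_eq
  -- bounds on extreme corner values
  have hbounds : Real.sqrt 27 * ρK^2 / 8 ≤ α - |β| - |γ| ∧ α + |β| + |γ| ≤ hK^2 / 4 := by
    rcases le_or_gt 0 β with hb | hb <;> rcases le_or_gt 0 γ with hg | hg
    · rw [abs_of_nonneg hb, abs_of_nonneg hg]
      exact ⟨by linarith [hv3, hL3], by linarith [hv1, hU 1 2 3]⟩
    · rw [abs_of_nonneg hb, abs_of_neg hg]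
      exact ⟨by linarith [hv2, hL2], by linarith [hv0, hU 0 1 2]⟩
    · rw [abs_of_neg hb, abs_of_nonneg hg]
      exact ⟨by linarith [hv0, hL0], by linarith [hv2, hU 2 3 0]⟩
    · rw [abs_of_neg hb, abs_of_neg hg]
      exact ⟨by linarith [hv1, hL1], by linarith [hv3, hU 3 0 1]⟩
  obtain ⟨hmlow, hMhigh⟩ := hbounds
  have hmpos : 0 < α - |β| - |γ| := by
    have hs27pos : 0 < Real.sqrt 27 := by linarith
    have : 0 < Real.sqrt 27 * ρK^2 / 8 :=
      div_pos (mul_pos hs27pos (pow_pos hρpos 2)) (by norm_num)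
    linarith
  rw [hsup, hinf]
  constructor
  · rw [div_lt_div_iff₀ hmpos (by positivity)]
    have e1 : (α + |β| + |γ|) * (2 * ρK^2) ≤ (hK^2/4) * (2 * ρK^2) :=
      mul_le_mul_of_nonneg_right hMhigh (by positivity)
    have e2 : hK^2 * (Real.sqrt 27 * ρK^2 / 8) ≤ hK^2 * (α - |β| - |γ|) :=
      mul_le_mul_of_nonneg_left hmlow (by positivity)
    have e3 : (hK^2/4) * (2 * ρK^2) < hK^2 * (Real.sqrt 27 * ρK^2 / 8) := by
      have h : 0 < hK^2 * ρK^2 := by positivity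
      nlinarith [hs27gt, h]
    linarith
  · rw [div_le_div_iff₀ (by positivity) (by norm_num : (0:ℝ) < 2)]
    have h := mul_self_le_mul_self (le_of_lt hK0) hreg
    nlinarith [h]
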